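/- Let γ ∈ (0,1) and define T : ℝ² ⇉ ℝ² by T(u₁,u₂) := {(γu₁, √((1-γ²)u₁² - u₂²))} when (1-γ²)u₁² ≥ u₂² and u₂ ≥ 0, and T(u) := ∅ otherwise. Let Ξ = diag(γ, 0). Then (a) T⁻¹(0) = {0}; (b) T is (Ξ, I, I)-partially strongly submonotone at (0,0) with global neighbourhood: ⟨w, u⟩ + ‖u‖²_{I-Ξ} ≥ ‖u‖² for all u ∈ dom T and w ∈ T(u); but (c) T is not (Ξ, I, I)-partially subregular at (0,0): for every neighbourhood of 0 there is u in it with w ∈ T(u) and ‖w‖² + ‖u‖²_{I-Ξ} < ‖u‖², e.g., any u with u₂² = (1-γ²)u₁², u₁ ≠ 0. -/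

import Mathlib

open scoped RealInnerProductSpace

lemma eucl_norm_sq (u : EuclideanSpace ℝ (Fin 2)) : ‖u‖^2 = (u 0)^2 + (u 1)^2 := by
  rw [EuclideanSpace.norm_eq, Real.sq_sqrt (by positivity)]
  simp [Fin.sum_univ_two, sq_abs]

lemma eucl_inner (w u : EuclideanSpace ℝ (Fin 2)) : ⟪w, u⟫ = w 0 * u 0 + w 1 * u 1 := by
  simp [PiLp.inner_apply, Fin.sum_univ_two]
  ring

/-- Example 5.5: a map that is `(Ξ, I, I)`-partially strongly submonotone with
`Ξ = diag(γ, 0)` at the origin but not `(Ξ, I, I)`-partially subregular there. -/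
theorem partial_submonotone_without_partial_subregular
    (γ : ℝ) (hγ0 : 0 < γ) (hγ1 : γ < 1)
    (T : EuclideanSpace ℝ (Fin 2) → Set (EuclideanSpace ℝ (Fin 2)))
    (hT : ∀ u, T u = {w | (u 1)^2 ≤ (1 - γ^2) * (u 0)^2 ∧ 0 ≤ u 1 ∧
      w 0 = γ * u 0 ∧ w 1 = Real.sqrt ((1 - γ^2) * (u 0)^2 - (u 1)^2)}) :
    ({v | (0 : EuclideanSpace ℝ (Fin 2)) ∈ T v} = {0})
    ∧ (∀ u, ∀ w ∈ T u, ⟪w, u⟫ + ((1 - γ) * (u 0)^2 + (u 1)^2) ≥ ‖u‖^2)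
    ∧ (∀ 𝒰 ∈ nhds (0 : EuclideanSpace ℝ (Fin 2)), ∃ u ∈ 𝒰, ∃ w ∈ T u,
        ‖w‖^2 + ((1 - γ) * (u 0)^2 + (u 1)^2) < ‖u‖^2) := by
  refine ⟨?_, ?_, ?_⟩
  · ext v
    simp only [Set.mem_setOf_eq, hT, Set.mem_singleton_iff]
    constructor
    · rintro ⟨h1, h2, h3, h4⟩
      have hv0 : v 0 = 0 := by
        have : (0 : EuclideanSpace ℝ (Fin 2)) 0 = 0 := rfl
        rw [this] at h3
        have := h3.symm
        rcases mul_eq_zero.mp this with h | h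
        · exact absurd h (ne_of_gt hγ0)
        · exact h
      have hv1 : v 1 = 0 := by
        rw [hv0] at h1
        nlinarith [sq_nonneg (v 1)]
      ext i
      fin_cases i <;> simp [hv0, hv1]
    · rintro rfl
      refine ⟨by simp, le_refl _, by simp, by simp⟩
  · intro u w hw
    rw [hT] at hw
    obtain ⟨h1, h2, h3, h4⟩ := hw
    rw [eucl_inner, eucl_norm_sq, h3, h4]
    nlinarith [Real.sqrt_nonneg ((1 - γ^2) * (u 0)^2 - (u 1)^2),
      mul_nonneg h2 (Real.sqrt_nonneg ((1 - γ^2) * (u 0)^2 - (u 1)^2))]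
  · intro 𝒰 h𝒰
    obtain ⟨r, hr, hball⟩ := Metric.mem_nhds_iff.mp h𝒰
    set s := Real.sqrt (1 - γ^2) with hs
    have hs2 : s^2 = 1 - γ^2 := Real.sq_sqrt (by nlinarith)
    have hsnn : 0 ≤ s := Real.sqrt_nonneg _
    set ε := r / 2 with hε
    have hεpos : 0 < ε := by positivity
    set u : EuclideanSpace ℝ (Fin 2) := !₂[ε, s * ε] with hu
    have hu0 : u 0 = ε := rfl
    have hu1 : u 1 = s * ε := rfl
    have hkey : (1 - γ^2) * (u 0)^2 - (u 1)^2 = 0 := by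
      rw [hu0, hu1]; nlinarith
    set w : EuclideanSpace ℝ (Fin 2) := !₂[γ * ε, 0] with hw
    have hw0 : w 0 = γ * ε := rfl
    have hw1 : w 1 = 0 := rfl
    have hunorm : ‖u‖^2 = ε^2 + s^2 * ε^2 := by
      rw [eucl_norm_sq, hu0, hu1]; ring
    refine ⟨u, ?_, w, ?_, ?_⟩
    · apply hball
      rw [Metric.mem_ball, dist_zero_right]
      have h1 : ‖u‖^2 < r^2 := by rw [hunorm]; nlinarith
      nlinarith [norm_nonneg u]
    · rw [hT]
      refine ⟨by nlinarith [hkey], by rw [hu1]; positivity, by rw [hw0, hu0], ?_⟩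
      rw [hw1, hkey, Real.sqrt_zero]
    · rw [eucl_norm_sq, hunorm, hw0, hw1, hu0, hu1]
      nlinarith [mul_pos (mul_pos hγ0 (sub_pos.mpr hγ1)) (mul_pos hεpos hεpos)]
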